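/- Let F be a field, f ∈ F[[x]][y] with μ ∈ F such that f(0, μ) = 0 and ∂_y f(0, μ) ≠ 0, and let φ ∈ F[[x]] be the unique power series root with constant term μ. Define φ₀ := μ and φ_{t+1} := φ_t − f(x, φ_t)/∂_y f(x, φ_t). Then each ∂_y f(x, φ_t) is a unit in F[[x]], and for all t ≥ 0, φ ≡ φ_t modulo ⟨x⟩^{2^t}. -/

import Mathlib

open Polynomial

private lemma cc_eval {F : Type*} [Field F] {n : ℕ}
    (p : Polynomial (MvPowerSeries (Fin n) F)) (a : MvPowerSeries (Fin n) F) :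
    (MvPowerSeries.constantCoeff : MvPowerSeries (Fin n) F →+* F) (p.eval a) =
      (p.map ((MvPowerSeries.constantCoeff : MvPowerSeries (Fin n) F →+* F))).eval
        ((MvPowerSeries.constantCoeff : MvPowerSeries (Fin n) F →+* F) a) := by
  rw [Polynomial.eval_map, Polynomial.eval₂_at_apply]

/-- Newton iteration with quadratic convergence: with `∂_y f(0,μ) ≠ 0` and the
iteration `φ₀ = μ`, `φ_{t+1} = φ_t − f(x, φ_t)/∂_y f(x, φ_t)`, each denominator
`∂_y f(x, φ_t)` is a unit of `F[[x]]` and the iterates agree with the unique power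
series root `φ` modulo `⟨x⟩^{2^t}`. -/
theorem newton_iteration_quadratic {F : Type*} [Field F] {n : ℕ}
    (f : Polynomial (MvPowerSeries (Fin n) F)) (μ : F)
    (h0 : (f.map ((MvPowerSeries.constantCoeff : MvPowerSeries (Fin n) F →+* F))).eval μ = 0)
    (h1 : ((derivative f).map ((MvPowerSeries.constantCoeff : MvPowerSeries (Fin n) F →+* F))).eval μ ≠ 0)
    (φ : MvPowerSeries (Fin n) F)
    (hφ0 : (MvPowerSeries.constantCoeff : MvPowerSeries (Fin n) F →+* F) φ = μ)
    (hφroot : f.eval φ = 0)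
    (φseq : ℕ → MvPowerSeries (Fin n) F)
    (hseq0 : φseq 0 = (MvPowerSeries.C : F →+* MvPowerSeries (Fin n) F) μ)
    (hseq : ∀ t, φseq (t + 1) =
      φseq t - f.eval (φseq t) * ((derivative f).eval (φseq t))⁻¹) :
    ∀ t, IsUnit ((derivative f).eval (φseq t)) ∧
      φ - φseq t ∈
        (RingHom.ker ((MvPowerSeries.constantCoeff : MvPowerSeries (Fin n) F →+* F))) ^ (2 ^ t) := by
  set cc := (MvPowerSeries.constantCoeff : MvPowerSeries (Fin n) F →+* F) with hcc
  set I := RingHom.ker cc with hI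
  -- for any ψ with φ - ψ ∈ I, the derivative evaluated at ψ has nonzero constant coeff
  have key : ∀ ψ : MvPowerSeries (Fin n) F, φ - ψ ∈ I →
      cc ((derivative f).eval ψ) ≠ 0 := by
    intro ψ hmem
    have hccψ : cc ψ = μ := by
      have h' : cc (φ - ψ) = 0 := hmem
      rw [map_sub] at h'
      rw [← sub_eq_zero.mp h', hφ0]
    rw [cc_eval, hccψ]
    exact h1
  intro t
  induction t with
  | zero =>
    have hmem0 : φ - φseq 0 ∈ I := by
      show cc (φ - φseq 0) = 0
      rw [map_sub, hφ0, hseq0, MvPowerSeries.constantCoeff_C, sub_self]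
    refine ⟨?_, by simpa using hmem0⟩
    exact IsUnit.of_mul_eq_one _ (MvPowerSeries.mul_inv_cancel _ (key _ hmem0))
  | succ t ih =>
    set ψ := φseq t with hψ
    set e := φ - ψ with he
    set d := (derivative f).eval ψ with hd
    have hmemt : e ∈ I ^ (2 ^ t) := ih.2
    have hmemI : e ∈ I := Ideal.pow_le_self (Nat.two_pow_pos t).ne' hmemt
    have hccd : cc d ≠ 0 := key _ hmemI
    have hinv : d * d⁻¹ = 1 := MvPowerSeries.mul_inv_cancel _ hccd
    obtain ⟨k, hk⟩ := f.binomExpansion ψ e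
    have hφeq : ψ + e = φ := by rw [he]; ring
    rw [hφeq, hφroot] at hk
    have heq : f.eval ψ + d * e + k * e ^ 2 = 0 := by rw [← hk]
    have hstep : φ - φseq (t + 1) = -(k * d⁻¹) * e ^ 2 := by
      rw [hseq t]
      linear_combination d⁻¹ * heq + (-e) * hinv
    have hmem' : φ - φseq (t + 1) ∈ I ^ (2 ^ (t + 1)) := by
      rw [hstep, pow_succ, pow_mul]
      exact Ideal.mul_mem_left _ _ (Ideal.pow_mem_pow hmemt 2)
    refine ⟨?_, hmem'⟩
    have hmemI' : φ - φseq (t + 1) ∈ I :=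
      Ideal.pow_le_self (Nat.two_pow_pos (t + 1)).ne' hmem'
    exact IsUnit.of_mul_eq_one _ (MvPowerSeries.mul_inv_cancel _ (key _ hmemI'))
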